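/- Let G be a countably infinite cancellative semigroup, let (F_n) be a Følner sequence in G, and let A ⊆ G. Then A is (F_n)-normal if and only if for every nonempty finite set K ⊆ G, the (F_n)-density of ⋂_{h∈K} h⁻¹A exists and equals 2^{−|K|}, i.e., |F_n ∩ ⋂_{h∈K} h⁻¹A|/|F_n| → 2^{−|K|}, where h⁻¹A = {g ∈ G : h·g ∈ A}. -/
import Mathlib

open Filter

/- `(F n)` is a (left) Følner sequence in the semigroup `G`. -/
open scoped Classical in
def IsFolner {G : Type*} [Mul G] (F : ℕ → Finset G) : Prop :=
  (∀ n, (F n).Nonempty) ∧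
  ∀ g : G, Tendsto
    (fun n => (((F n).filter (fun h => g * h ∈ F n)).card : ℝ) / (F n).card)
    atTop (nhds 1)

/- `A ⊆ G` is `(F n)`-normal. -/
open scoped Classical in
def IsNormalSet {G : Type*} [Mul G] (F : ℕ → Finset G) (A : Set G) : Prop :=
  ∀ K : Finset G, K.Nonempty → ∀ B : G → Bool,
    Tendsto
      (fun n =>
        (((F n).filter (fun g => ∀ h ∈ K, (h * g ∈ A ↔ B h = true))).card : ℝ) / (F n).card)
      atTop (nhds ((1 / 2 : ℝ) ^ K.card))

open scoped Classical in
/-- Pointwise inclusion–exclusion identity for indicators. -/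
lemma indicator_pattern_eq {G : Type*} [Mul G] (A : Set G) (K : Finset G) (B : G → Bool)
    (g : G) :
    (if (∀ h ∈ K, (h * g ∈ A ↔ B h = true)) then (1 : ℝ) else 0) =
      ∑ S ∈ (K.filter (fun h => B h = false)).powerset,
        (-1 : ℝ) ^ S.card *
          (if ∀ h ∈ (K.filter (fun h => B h = true)) ∪ S, h * g ∈ A then 1 else 0) := by
  set T := K.filter (fun h => B h = true) with hT
  set K₀ := K.filter (fun h => B h = false) with hK₀
  set M := K₀.filter (fun h => h * g ∈ A) with hM
  have hMK : M ⊆ K₀ := Finset.filter_subset _ _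
  have step : ∀ S ∈ K₀.powerset,
      (-1 : ℝ) ^ S.card * (if ∀ h ∈ T ∪ S, h * g ∈ A then 1 else 0) =
      (if ∀ h ∈ T, h * g ∈ A then 1 else 0) * (if S ⊆ M then (-1 : ℝ) ^ S.card else 0) := by
    intro S hS
    rw [Finset.mem_powerset] at hS
    have hiff : (∀ h ∈ T ∪ S, h * g ∈ A) ↔ ((∀ h ∈ T, h * g ∈ A) ∧ S ⊆ M) := by
      constructor
      · intro h
        refine ⟨fun x hx => h x (Finset.mem_union_left _ hx), fun x hx => ?_⟩
        exact Finset.mem_filter.2 ⟨hS hx, h x (Finset.mem_union_right _ hx)⟩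
      · rintro ⟨h1, h2⟩ x hx
        rcases Finset.mem_union.1 hx with hx | hx
        · exact h1 x hx
        · exact (Finset.mem_filter.1 (h2 hx)).2
    by_cases h1 : ∀ h ∈ T, h * g ∈ A
    · by_cases h2 : S ⊆ M
      · rw [if_pos (hiff.2 ⟨h1, h2⟩), if_pos h1, if_pos h2]; ring
      · rw [if_neg (fun h => h2 (hiff.1 h).2), if_neg h2]; ring
    · rw [if_neg (fun h => h1 (hiff.1 h).1), if_neg h1]; ring
  rw [Finset.sum_congr rfl step, ← Finset.mul_sum]
  have hfil : K₀.powerset.filter (fun S => S ⊆ M) = M.powerset := by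
    ext S
    simp only [Finset.mem_filter, Finset.mem_powerset]
    exact ⟨fun h => h.2, fun h => ⟨h.trans hMK, h⟩⟩
  rw [← Finset.sum_filter, hfil]
  have hsum : (∑ S ∈ M.powerset, (-1 : ℝ) ^ S.card) = if M = ∅ then 1 else 0 := by
    have h0 := Finset.sum_powerset_neg_one_pow_card (x := M)
    have h1 : (∑ S ∈ M.powerset, (-1 : ℝ) ^ S.card) =
        ((∑ S ∈ M.powerset, (-1 : ℤ) ^ S.card : ℤ) : ℝ) := by push_cast; rfl
    rw [h1, h0]
    split_ifs <;> simp
  rw [hsum]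
  have hiff : (∀ h ∈ K, (h * g ∈ A ↔ B h = true)) ↔
      ((∀ h ∈ T, h * g ∈ A) ∧ M = ∅) := by
    constructor
    · intro h
      constructor
      · intro x hx
        have := Finset.mem_filter.1 hx
        exact (h x this.1).2 this.2
      · rw [Finset.eq_empty_iff_forall_notMem]
        intro x hx
        rcases Finset.mem_filter.1 hx with ⟨hx0, hxA⟩
        rcases Finset.mem_filter.1 hx0 with ⟨hxK, hxB⟩
        have := (h x hxK).1 hxA
        simp [hxB] at this
    · rintro ⟨h1, h2⟩ x hx
      by_cases hb : B x = true
      · simp only [hb, iff_true]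
        exact h1 x (Finset.mem_filter.2 ⟨hx, hb⟩)
      · have hb' : B x = false := by
          rcases Bool.dichotomy (B x) with h | h
          · exact h
          · exact absurd h hb
        constructor
        · intro hxA
          exfalso
          have : x ∈ M := Finset.mem_filter.2 ⟨Finset.mem_filter.2 ⟨hx, hb'⟩, hxA⟩
          simp [h2] at this
        · intro h; exact absurd h hb
  by_cases h1 : ∀ h ∈ T, h * g ∈ A <;> by_cases h2 : M = ∅ <;>
    simp [hiff, h1, h2]

open scoped Classical in
theorem normal_iff_intersections_density
    {G : Type*} [Semigroup G] [IsCancelMul G] [Countable G] [Infinite G]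
    (F : ℕ → Finset G) (hF : IsFolner F) (A : Set G) :
    IsNormalSet F A ↔
      ∀ K : Finset G, K.Nonempty →
        Tendsto
          (fun n => (((F n).filter (fun g => ∀ h ∈ K, h * g ∈ A)).card : ℝ) / (F n).card)
          atTop (nhds ((1 / 2 : ℝ) ^ K.card)) := by
  have hcard : ∀ n, ((F n).card : ℝ) ≠ 0 := fun n => by
    exact_mod_cast Finset.card_ne_zero_of_mem (hF.1 n).choose_spec
  constructor
  · intro hN K hK
    have := hN K hK (fun _ => true)
    simpa using this
  · intro hD K hK B
    have hD' : ∀ K : Finset G,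
        Tendsto
          (fun n => (((F n).filter (fun g => ∀ h ∈ K, h * g ∈ A)).card : ℝ) / (F n).card)
          atTop (nhds ((1 / 2 : ℝ) ^ K.card)) := by
      intro K
      rcases K.eq_empty_or_nonempty with rfl | hK
      · have heq : ∀ n, (((F n).filter
            (fun g => ∀ h ∈ (∅ : Finset G), h * g ∈ A)).card : ℝ) / (F n).card = 1 := by
          intro n
          rw [Finset.filter_true_of_mem (by simp)]
          exact div_self (hcard n)
        rw [show (fun n => (((F n).filter
            (fun g => ∀ h ∈ (∅ : Finset G), h * g ∈ A)).card : ℝ) / (F n).card) =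
            fun _ => (1 : ℝ) from funext heq]
        simpa using tendsto_const_nhds
      · exact hD K hK
    set T := K.filter (fun h => B h = true) with hT
    set K₀ := K.filter (fun h => B h = false) with hK₀
    have key : ∀ n, (((F n).filter (fun g => ∀ h ∈ K, (h * g ∈ A ↔ B h = true))).card : ℝ) /
        (F n).card =
        ∑ S ∈ K₀.powerset, (-1 : ℝ) ^ S.card *
          ((((F n).filter (fun g => ∀ h ∈ T ∪ S, h * g ∈ A)).card : ℝ) / (F n).card) := by
      intro n
      have lhs : (((F n).filter (fun g => ∀ h ∈ K, (h * g ∈ A ↔ B h = true))).card : ℝ) =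
          ∑ g ∈ F n, (if (∀ h ∈ K, (h * g ∈ A ↔ B h = true)) then (1 : ℝ) else 0) := by
        rw [Finset.sum_boole]
      have rhs : ∀ S : Finset G,
          (((F n).filter (fun g => ∀ h ∈ T ∪ S, h * g ∈ A)).card : ℝ) =
          ∑ g ∈ F n, (if ∀ h ∈ T ∪ S, h * g ∈ A then (1 : ℝ) else 0) := by
        intro S
        rw [Finset.sum_boole]
      rw [lhs]
      have hmain : ∑ g ∈ F n, (if (∀ h ∈ K, (h * g ∈ A ↔ B h = true)) then (1 : ℝ) else 0) =
          ∑ S ∈ K₀.powerset, (-1 : ℝ) ^ S.card *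
            (((F n).filter (fun g => ∀ h ∈ T ∪ S, h * g ∈ A)).card : ℝ) := by
        rw [Finset.sum_congr rfl (fun g _ => indicator_pattern_eq A K B g), Finset.sum_comm]
        exact Finset.sum_congr rfl fun S _ => by rw [← Finset.mul_sum, ← rhs]
      rw [hmain, Finset.sum_div]
      exact Finset.sum_congr rfl fun S _ => by ring
    simp only [key]
    have hlim : Tendsto (fun n => ∑ S ∈ K₀.powerset, (-1 : ℝ) ^ S.card *
          ((((F n).filter (fun g => ∀ h ∈ T ∪ S, h * g ∈ A)).card : ℝ) / (F n).card))
        atTop (nhds (∑ S ∈ K₀.powerset, (-1 : ℝ) ^ S.card * (1 / 2 : ℝ) ^ (T ∪ S).card)) := by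
      refine tendsto_finset_sum _ fun S _ => Tendsto.const_mul _ ?_
      exact hD' (T ∪ S)
    convert hlim using 2
    have hdisj : ∀ S ∈ K₀.powerset, Disjoint T S := by
      intro S hS
      rw [Finset.mem_powerset] at hS
      refine Finset.disjoint_left.2 fun x hxT hxS => ?_
      have h1 := (Finset.mem_filter.1 hxT).2
      have h2 := (Finset.mem_filter.1 (hS hxS)).2
      simp [h1] at h2
    have hcards : ∀ S ∈ K₀.powerset, (T ∪ S).card = T.card + S.card := fun S hS =>
      Finset.card_union_of_disjoint (hdisj S hS)
    have hsplit : ∑ S ∈ K₀.powerset, (-1 : ℝ) ^ S.card * (1 / 2 : ℝ) ^ (T ∪ S).card =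
        (1 / 2 : ℝ) ^ T.card * ∑ S ∈ K₀.powerset, (-(1/2) : ℝ) ^ S.card := by
      rw [Finset.mul_sum]
      refine Finset.sum_congr rfl fun S hS => ?_
      rw [hcards S hS, pow_add, show (-(1/2) : ℝ) = (-1) * (1/2) from by norm_num, mul_pow]
      ring
    rw [hsplit]
    have hps : ∑ S ∈ K₀.powerset, (-(1/2) : ℝ) ^ S.card = (1 / 2 : ℝ) ^ K₀.card := by
      rw [Finset.sum_powerset_apply_card (fun m => (-(1/2) : ℝ) ^ m)]
      have hb := add_pow (-(1/2) : ℝ) 1 K₀.card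
      simp only [one_pow, mul_one] at hb
      have he : (-(1/2 : ℝ) + 1) = 1/2 := by norm_num
      rw [he] at hb
      calc ∑ m ∈ Finset.range (K₀.card + 1), K₀.card.choose m • (-(1/2) : ℝ) ^ m
          = ∑ m ∈ Finset.range (K₀.card + 1), (-(1/2) : ℝ) ^ m * K₀.card.choose m := by
            refine Finset.sum_congr rfl fun m _ => ?_
            rw [nsmul_eq_mul]; ring
        _ = (1 / 2 : ℝ) ^ K₀.card := hb.symm
    rw [hps, ← pow_add]
    congr 1
    have hK₀' : K₀ = K.filter (fun h => ¬ (B h = true)) := by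
      rw [hK₀]
      apply Finset.filter_congr
      intro x _
      simp
    rw [hT, hK₀', Finset.card_filter_add_card_filter_not]
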